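/- Let $T$ be a bounded operator on a separable Banach space $X$ and $B_T$ the shift operator on $Y=\ell^p(X,\mathbb{N})$ (or $c_0(X,\mathbb{N})$) given by $B_T(x_1,x_2,\dots)=(Tx_2,Tx_3,\dots)$. The operator $B_T$ is hypercyclic on $Y$ if and only if for every $N\ge 1$ and every family $(U_j)_{1\le j\le N}$ of non-empty open subsets of $X$, there exists $n\ge 1$ such that $T^n(B_X(0,1))\cap U_j\ne\emptyset$ for all $1\le j\le N$. -/

import Mathlib

open Filter Topology ENNReal

section Defs
variable {Y : Type*} [TopologicalSpace Y]

/-- A map is hypercyclic if some point has dense orbit. -/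
def Hypercyclic (f : Y → Y) : Prop := ∃ y : Y, Dense (Set.range fun n : ℕ => f^[n] y)

/-- Topological transitivity. -/
def TopologicallyTransitive (f : Y → Y) : Prop :=
  ∀ U V : Set Y, IsOpen U → IsOpen V → U.Nonempty → V.Nonempty →
    ∃ n : ℕ, (f^[n] '' U ∩ V).Nonempty

/-- Topological mixing: return sets of pairs of non-empty open sets are cofinite. -/
def TopologicallyMixing (f : Y → Y) : Prop :=
  ∀ U V : Set Y, IsOpen U → IsOpen V → U.Nonempty → V.Nonempty →
    ∃ N : ℕ, ∀ n ≥ N, (f^[n] '' U ∩ V).Nonempty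

/-- Weak mixing: `f ⊕ f` is hypercyclic. -/
def WeaklyMixing (f : Y → Y) : Prop := Hypercyclic (fun q : Y × Y => (f q.1, f q.2))

/-- Chaos in the sense of Devaney: hypercyclic with a dense set of periodic points. -/
def Chaotic (f : Y → Y) : Prop :=
  Hypercyclic f ∧ Dense {y : Y | ∃ d : ℕ, 1 ≤ d ∧ f^[d] y = y}

/-- Lower density of a set of natural numbers. -/
noncomputable def lowerDensity (A : Set ℕ) : ℝ :=
  Filter.liminf
    (fun N : ℕ => (∑ n ∈ Finset.range N, Set.indicator A (fun _ => (1 : ℝ)) n) / N)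
    Filter.atTop

/-- Frequent hypercyclicity: some orbit visits every non-empty open set along a set of
positive lower density. -/
def FrequentlyHypercyclic (f : Y → Y) : Prop :=
  ∃ y : Y, ∀ U : Set Y, IsOpen U → U.Nonempty → 0 < lowerDensity {n : ℕ | f^[n] y ∈ U}

end Defs

/-- The `c₀`-sum of a family of normed spaces, realised as a submodule of `lp E ∞`:
those bounded families whose norms tend to `0` along the cofinite filter. -/
noncomputable def c0Sum {ι : Type*} (E : ι → Type*) [∀ i, NormedAddCommGroup (E i)]
    [∀ i, NormedSpace ℝ (E i)] : Submodule ℝ (lp E ∞) where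
  carrier := {x | Tendsto (fun i => ‖(x : ∀ i, E i) i‖) cofinite (nhds 0)}
  add_mem' := by
    intro a b ha hb
    refine squeeze_zero (fun i => norm_nonneg _) (fun i => ?_) (by simpa using ha.add hb)
    simp only [lp.coeFn_add, Pi.add_apply]
    exact norm_add_le _ _
  zero_mem' := by
    simp only [Set.mem_setOf_eq, lp.coeFn_zero, Pi.zero_apply, norm_zero]
    exact tendsto_const_nhds
  smul_mem' := by
    intro c a ha
    have h : Tendsto (fun i => ‖c‖ * ‖(a : ∀ i, E i) i‖) cofinite (nhds 0) := by
      simpa using ha.const_mul ‖c‖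
    refine squeeze_zero (fun i => norm_nonneg _) (fun i => ?_) h
    simp only [lp.coeFn_smul, Pi.smul_apply]
    exact (norm_smul c _).le

/-- The identity, as a continuous linear map between equal members of a family of spaces. -/
def castL (E : ℤ → Type*) [∀ k, NormedAddCommGroup (E k)] [∀ k, NormedSpace ℝ (E k)]
    {j k : ℤ} (h : j = k) : E j →L[ℝ] E k := by
  subst h; exact ContinuousLinearMap.id ℝ (E j)

/-- The composite `T_{j,j+n} = T_{j+1} ∘ ⋯ ∘ T_{j+n} : E (j+n) → E j` (here `T k` denotes
the operator `E (k+1) → E k`). -/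
noncomputable def iterComp {E : ℤ → Type*} [∀ k, NormedAddCommGroup (E k)]
    [∀ k, NormedSpace ℝ (E k)] (T : ∀ k : ℤ, E (k + 1) →L[ℝ] E k) :
    ∀ (j : ℤ) (n : ℕ), E (j + n) →L[ℝ] E j
  | j, 0 => castL E (by simp)
  | j, (n + 1) => (iterComp T j n).comp ((T (j + n)).comp (castL E (by push_cast; ring)))



-- ===== auxiliary development =====

section Helpers
variable {X Y : Type*} [NormedAddCommGroup X] [NormedSpace ℝ X]
  [NormedAddCommGroup Y] [NormedSpace ℝ Y]

lemma clm_iter_norm_le (B : Y →L[ℝ] Y) (n : ℕ) (y : Y) :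
    ‖(⇑B)^[n] y‖ ≤ (1 + ‖B‖) ^ n * ‖y‖ := by
  induction n with
  | zero => simp
  | succ n ih =>
    rw [Function.iterate_succ_apply']
    calc ‖B ((⇑B)^[n] y)‖ ≤ ‖B‖ * ‖(⇑B)^[n] y‖ := B.le_opNorm _
    _ ≤ (1 + ‖B‖) * ((1 + ‖B‖) ^ n * ‖y‖) := by
        have h0 : (0:ℝ) ≤ ‖B‖ := norm_nonneg _
        have := mul_le_mul_of_nonneg_left ih h0
        nlinarith [norm_nonneg ((⇑B)^[n] y), norm_nonneg y, pow_nonneg (by linarith : (0:ℝ) ≤ 1 + ‖B‖) n]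
    _ = (1 + ‖B‖) ^ (n+1) * ‖y‖ := by ring

lemma clm_iter_smul (T : X →L[ℝ] X) (n : ℕ) (c : ℝ) (x : X) :
    (⇑T)^[n] (c • x) = c • (⇑T)^[n] x := by
  induction n generalizing x with
  | zero => simp
  | succ n ih => rw [Function.iterate_succ_apply, Function.iterate_succ_apply, map_smul, ih]

lemma clm_iter_zero (T : X →L[ℝ] X) (n : ℕ) : (⇑T)^[n] (0 : X) = 0 := by
  induction n with
  | zero => simp
  | succ n ih => rw [Function.iterate_succ_apply, map_zero, ih]

/-- in a T1 space with no isolated points, a dense orbit visits every nonempty open set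
at arbitrarily large times. -/
lemma dense_orbit_visits {Z : Type*} [TopologicalSpace Z] [T1Space Z]
    (hni : ∀ z : Z, (𝓝[≠] z).NeBot) (f : Z → Z) (y : Z)
    (hd : Dense (Set.range fun n : ℕ => f^[n] y)) (V : Set Z) (hV : IsOpen V)
    (hne : V.Nonempty) (m : ℕ) : ∃ n, m ≤ n ∧ f^[n] y ∈ V := by
  classical
  have hFfin : (Set.Finite ((fun k => f^[k] y) '' (Set.Iio m))) :=
    (Set.finite_Iio m).image _
  obtain ⟨v, hv⟩ := hne
  have hVinf : V.Infinite := by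
    haveI := hni v
    exact infinite_of_mem_nhds v (hV.mem_nhds hv)
  have hne' : (V \ ((fun k => f^[k] y) '' (Set.Iio m))).Nonempty :=
    (hVinf.diff hFfin).nonempty
  have hopen' : IsOpen (V \ ((fun k => f^[k] y) '' (Set.Iio m))) :=
    hV.sdiff hFfin.isClosed
  obtain ⟨z, hz1, hz2⟩ := hd.exists_mem_open hopen' hne'
  obtain ⟨n, rfl⟩ := hz1
  refine ⟨n, ?_, hz2.1⟩
  by_contra h
  exact hz2.2 ⟨n, by simpa using Nat.lt_of_not_le h, rfl⟩
end Helpers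

section Abstract
variable {X Y : Type*} [NormedAddCommGroup X] [NormedSpace ℝ X]
  [NormedAddCommGroup Y] [NormedSpace ℝ Y] [CompleteSpace Y]

-- helpers
set_option maxHeartbeats 4000000 in
theorem abstract_shift
    [TopologicalSpace.SeparableSpace X]
    (T : X →L[ℝ] X) (B : Y →L[ℝ] Y)
    (e : ℕ → Y →L[ℝ] X) (ι : ℕ → X →L[ℝ] Y)
    (he : ∀ (k : ℕ) (y : Y), ‖e k y‖ ≤ ‖y‖)
    (hι : ∀ (k : ℕ) (x : X), ‖ι k x‖ ≤ ‖x‖)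
    (hei : ∀ k x, e k (ι k x) = x)
    (heij : ∀ j k, j ≠ k → ∀ x, e k (ι j x) = 0)
    (hsep : ∀ y : Y, (∀ k, e k y = 0) → y = 0)
    (hdense : ∀ y : Y, ∀ ε : ℝ, 0 < ε →
      ∃ (N : ℕ) (x : ℕ → X), ‖y - ∑ k ∈ Finset.range N, ι k (x k)‖ < ε)
    (hto0 : ∀ y : Y, Tendsto (fun k => ‖e k y‖) atTop (nhds 0))
    (hB : ∀ (y : Y) (k : ℕ), e k (B y) = T (e (k+1) y)) :
    Hypercyclic ⇑B ↔
      ∀ N : ℕ, 1 ≤ N → ∀ U : Fin N → Set X, (∀ j, IsOpen (U j)) → (∀ j, (U j).Nonempty) →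
        ∃ n : ℕ, 1 ≤ n ∧ ∀ j, ((⇑T)^[n] '' Metric.ball (0 : X) 1 ∩ U j).Nonempty := by
  classical
  -- coordinates of iterates
  have hiter : ∀ (n k : ℕ) (y : Y), e k ((⇑B)^[n] y) = (⇑T)^[n] (e (k + n) y) := by
    intro n
    induction n with
    | zero => intro k y; simp
    | succ n ih =>
      intro k y
      rw [Function.iterate_succ_apply', hB, ih (k+1) y]
      rw [show k + (n + 1) = k + 1 + n by omega, ← Function.iterate_succ_apply' ⇑T n]
  rcases subsingleton_or_nontrivial X with hX | hX
  · -- trivial case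
    have hY : ∀ y : Y, y = 0 := by
      intro y
      have : ∀ ε : ℝ, 0 < ε → ‖y‖ < ε := by
        intro ε hε
        obtain ⟨N, x, hx⟩ := hdense y ε hε
        have hz : ∀ k ∈ Finset.range N, ι k (x k) = (0 : Y) := by
          intro k _
          have : x k = 0 := Subsingleton.elim _ _
          rw [this, map_zero]
        rwa [Finset.sum_congr rfl hz, Finset.sum_const_zero, sub_zero] at hx
      by_contra h
      exact absurd (this ‖y‖ (norm_pos_iff.2 h)) (lt_irrefl _)
    constructor
    · intro _ N hN U hUo hUne
      refine ⟨1, le_refl _, fun j => ?_⟩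
      obtain ⟨u, hu⟩ := hUne j
      refine ⟨u, ⟨0, ?_, ?_⟩, hu⟩
      · exact Metric.mem_ball_self one_pos
      · exact Subsingleton.elim _ _
    · intro _
      refine ⟨0, ?_⟩
      intro z
      have : z = (fun n : ℕ => (⇑B)^[n] 0) 0 := by
        rw [hY z, hY ((fun n : ℕ => (⇑B)^[n] 0) 0)]
      rw [this]
      exact subset_closure ⟨0, rfl⟩
  · -- nontrivial case
    have hYnt : Nontrivial Y := by
      obtain ⟨x₀, hx₀⟩ := exists_ne (0 : X)
      refine ⟨ι 0 x₀, 0, fun h => hx₀ ?_⟩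
      have := congrArg (e 0) h
      rwa [hei, map_zero] at this
    have hni : ∀ z : Y, (𝓝[≠] z).NeBot := fun z => Module.punctured_nhds_neBot ℝ Y z
    constructor
    · -- forward
      rintro ⟨y, hy⟩ N hN U hUo hUne
      choose u hu using hUne
      have hball : ∀ j, ∃ ε : ℝ, 0 < ε ∧ Metric.ball (u j) ε ⊆ U j := by
        intro j
        obtain ⟨ε, hε, hsub⟩ := Metric.isOpen_iff.1 (hUo j) (u j) (hu j)
        exact ⟨ε, hε, hsub⟩
      choose ε hε hsub using hball
      set V : Set Y := ⋂ j : Fin N, (e (j : ℕ)) ⁻¹' Metric.ball (u j) (ε j) with hV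
      have hVopen : IsOpen V :=
        isOpen_iInter_of_finite fun j => (Metric.isOpen_ball).preimage (e (j:ℕ)).continuous
      have hVne : V.Nonempty := by
        refine ⟨∑ k ∈ Finset.range N, ι k (if h : k < N then u ⟨k, h⟩ else 0), ?_⟩
        rw [hV]
        simp only [Set.mem_iInter, Set.mem_preimage]
        intro j
        rw [map_sum]
        rw [Finset.sum_eq_single (j : ℕ)]
        · rw [dif_pos j.isLt, hei]
          simpa [Metric.mem_ball, dist_self] using hε j
        · intro k _ hk
          exact heij k j hk _
        · intro h
          exact absurd (Finset.mem_range.2 j.isLt) h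
      obtain ⟨m, hm⟩ := (Metric.tendsto_atTop.1 (hto0 y) 1 one_pos)
      obtain ⟨n, hn, hnV⟩ := dense_orbit_visits hni ⇑B y hy V hVopen hVne (max m 1)
      refine ⟨n, le_trans (le_max_right m 1) hn, fun j => ?_⟩
      refine ⟨(⇑T)^[n] (e ((j : ℕ) + n) y), ⟨e ((j : ℕ) + n) y, ?_, rfl⟩, ?_⟩
      · have hmn : m ≤ (j : ℕ) + n := le_trans (le_trans (le_max_left m 1) hn) (Nat.le_add_left _ _)
        have := hm _ hmn
        simpa [Metric.mem_ball, Real.dist_eq, abs_of_nonneg (norm_nonneg _)] using this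
      · rw [← hiter n (j : ℕ) y]
        exact hsub j (Set.mem_iInter.1 hnV j)
    · intro hcond
      -- Step A: refined condition with arbitrarily large times and small witnesses
      have refined : ∀ (m : ℕ) (δ : ℝ), 0 < δ → ∀ (M : ℕ) (U : Fin M → Set X),
          (∀ j, IsOpen (U j)) → (∀ j, (U j).Nonempty) →
          ∃ n : ℕ, m ≤ n ∧ ∀ j, ∃ a : X, ‖a‖ < δ ∧ (⇑T)^[n] a ∈ U j := by
        intro m δ hδ M U hUo hUne
        obtain ⟨x₀, hx₀⟩ := exists_ne (0 : X)
        set C : ℝ := ∑ k ∈ Finset.range m, (1 + ‖T‖) ^ k with hC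
        set W : Set X := {x | C < ‖x‖} with hW
        have hWopen : IsOpen W := isOpen_lt continuous_const continuous_norm
        have hWne : W.Nonempty := by
          refine ⟨((C + 1) / ‖x₀‖) • x₀, ?_⟩
          have hx0 : (0:ℝ) < ‖x₀‖ := norm_pos_iff.2 hx₀
          have hCnn : 0 ≤ C := Finset.sum_nonneg fun k _ => pow_nonneg (by positivity) k
          simp only [hW, Set.mem_setOf_eq, norm_smul, Real.norm_eq_abs]
          rw [abs_of_nonneg (by positivity), div_mul_cancel₀ _ hx0.ne']
          linarith
        set V : Fin (M+1) → Set X := Fin.snoc (fun j => (fun x : X => δ • x) ⁻¹' U j) W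
          with hVdef
        have hVo : ∀ j, IsOpen (V j) := by
          intro j
          refine Fin.lastCases ?_ (fun i => ?_) j
          · rw [hVdef, Fin.snoc_last]; exact hWopen
          · rw [hVdef, Fin.snoc_castSucc]
            exact (hUo _).preimage (continuous_const_smul δ)
        have hVne : ∀ j, (V j).Nonempty := by
          intro j
          refine Fin.lastCases ?_ (fun i => ?_) j
          · rw [hVdef, Fin.snoc_last]; exact hWne
          · rw [hVdef, Fin.snoc_castSucc]
            obtain ⟨u, hu⟩ := hUne i
            refine ⟨δ⁻¹ • u, ?_⟩
            simp only [Set.mem_preimage, smul_smul, mul_inv_cancel₀ hδ.ne', one_smul]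
            exact hu
        obtain ⟨n, hn1, hn⟩ := hcond (M+1) (Nat.succ_le_succ (Nat.zero_le _)) V hVo hVne
        obtain ⟨-, ⟨b, hb, rfl⟩, hbW⟩ := hn (Fin.last M)
        rw [hVdef, Fin.snoc_last] at hbW
        have hnm : m ≤ n := by
          by_contra h
          push_neg at h
          have h1 : ‖(⇑T)^[n] b‖ ≤ (1 + ‖T‖) ^ n * ‖b‖ := clm_iter_norm_le T n b
          have h2 : ‖b‖ < 1 := mem_ball_zero_iff.1 hb
          have h3 : (1 + ‖T‖) ^ n ≤ C := by
            rw [hC]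
            exact Finset.single_le_sum (f := fun k => (1 + ‖T‖)^k)
              (fun k _ => by positivity) (Finset.mem_range.2 h)
          have h4 : C < ‖(⇑T)^[n] b‖ := hbW
          nlinarith [pow_nonneg (by positivity : (0:ℝ) ≤ 1 + ‖T‖) n, norm_nonneg b]
        refine ⟨n, hnm, fun j => ?_⟩
        obtain ⟨-, ⟨b, hb, rfl⟩, hbU⟩ := hn (Fin.castSucc j)
        rw [hVdef, Fin.snoc_castSucc] at hbU
        refine ⟨δ • b, ?_, ?_⟩
        · rw [norm_smul, Real.norm_eq_abs, abs_of_pos hδ]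
          have h2 : ‖b‖ < 1 := mem_ball_zero_iff.1 hb
          nlinarith
        · rw [clm_iter_smul]
          exact hbU
      -- Step B: countable dense family of finitely supported targets
      obtain ⟨D, hDc, hDd⟩ := TopologicalSpace.exists_countable_dense X
      haveI := hDc.to_subtype
      have hInst : Nonempty ((Σ N : ℕ, (Fin N → D)) × ℕ) := ⟨⟨⟨0, fun j => j.elim0⟩, 0⟩⟩
      obtain ⟨σ, hσ⟩ := exists_surjective_nat ((Σ N : ℕ, (Fin N → D)) × ℕ)
      let tvec : (Σ N : ℕ, (Fin N → D)) → ℕ → X := fun i k =>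
        if h : k < i.1 then (i.2 ⟨k, h⟩ : X) else 0
      let tgt : (Σ N : ℕ, (Fin N → D)) → Y := fun i =>
        ∑ k ∈ Finset.range i.1, ι k (tvec i k)
      have htgt : ∀ z : Y, ∀ ε : ℝ, 0 < ε → ∃ i, ‖z - tgt i‖ < ε := by
        intro z ε hε
        obtain ⟨N, x, hx⟩ := hdense z (ε/2) (by linarith)
        have hax : ∀ k : Fin N, ∃ d : D, ‖x (k : ℕ) - (d : X)‖ < ε / (2 * (N+1)) := by
          intro k
          have hpos : (0:ℝ) < ε / (2*((N:ℝ)+1)) := by positivity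
          obtain ⟨d, hd2, hd1⟩ :=
            hDd.exists_mem_open Metric.isOpen_ball ⟨_, Metric.mem_ball_self hpos⟩
          refine ⟨⟨d, hd2⟩, ?_⟩
          rw [← dist_eq_norm, dist_comm]
          exact Metric.mem_ball.1 hd1
        choose d hd using hax
        refine ⟨⟨N, d⟩, ?_⟩
        have hsum2 : ‖(∑ k ∈ Finset.range N, ι k (x k)) - tgt ⟨N, d⟩‖ ≤ ε / 2 := by
          have heq : (∑ k ∈ Finset.range N, ι k (x k)) - tgt ⟨N, d⟩
              = ∑ k ∈ Finset.range N, ι k (x k - tvec ⟨N, d⟩ k) := by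
            rw [← Finset.sum_sub_distrib]
            exact Finset.sum_congr rfl fun k _ => by rw [map_sub]
          rw [heq]
          calc ‖∑ k ∈ Finset.range N, ι k (x k - tvec ⟨N, d⟩ k)‖
              ≤ ∑ k ∈ Finset.range N, ‖x k - tvec ⟨N, d⟩ k‖ :=
                le_trans (norm_sum_le _ _) (Finset.sum_le_sum fun k _ => hι _ _)
            _ ≤ ∑ _k ∈ Finset.range N, (ε / (2*(N+1))) := by
                refine Finset.sum_le_sum fun k hk => ?_
                have hk' : k < N := Finset.mem_range.1 hk
                have : tvec ⟨N, d⟩ k = (d ⟨k, hk'⟩ : X) := by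
                  simp only [tvec, dif_pos hk']
                rw [this]
                exact le_of_lt (hd ⟨k, hk'⟩)
            _ = N * (ε / (2*(N+1))) := by
                rw [Finset.sum_const, Finset.card_range, nsmul_eq_mul]
            _ ≤ ε / 2 := by
                rw [← mul_div_assoc]
                rw [div_le_div_iff₀ (by positivity) (by norm_num)]
                nlinarith [hε.le, Nat.cast_nonneg (α := ℝ) N]
        calc ‖z - tgt ⟨N, d⟩‖
            ≤ ‖z - ∑ k ∈ Finset.range N, ι k (x k)‖
              + ‖(∑ k ∈ Finset.range N, ι k (x k)) - tgt ⟨N, d⟩‖ := by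
              simpa using norm_sub_le_norm_sub_add_norm_sub z
                (∑ k ∈ Finset.range N, ι k (x k)) (tgt ⟨N, d⟩)
          _ < ε/2 + ε/2 := by
              exact add_lt_add_of_lt_of_le hx hsum2
          _ = ε := by ring
      -- Step C: scheduled data
      let Ns : ℕ → ℕ := fun s => (σ s).1.1
      let cs : ℕ → ℕ → X := fun s => tvec (σ s).1
      let ts : ℕ → Y := fun s => tgt (σ s).1
      let eps : ℕ → ℝ := fun s => 1 / ((σ s).2 + 1)
      have heps : ∀ s, 0 < eps s := fun s => by positivity
      let Em : ℕ → ℝ := fun s => (Finset.range (s+1)).inf' (by simp) eps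
      have hEm : ∀ s, 0 < Em s := fun s =>
        (Finset.lt_inf'_iff _).2 fun s' _ => heps s'
      have hEmle : ∀ s' s, s' ≤ s → Em s ≤ eps s' := fun s' s h =>
        Finset.inf'_le _ (Finset.mem_range.2 (Nat.lt_succ_of_le h))
      let dl : ℕ → ℕ → ℝ := fun s prev =>
        min ((1/2)^s) ((1/2)^s * Em s / (2 * (1 + ‖B‖) ^ prev)) / (Ns s + 1)
      have hdlpos : ∀ s prev, 0 < dl s prev := by
        intro s prev
        have h1 : (0:ℝ) < (1/2)^s := by positivity
        have h2 : (0:ℝ) < (1/2)^s * Em s / (2 * (1 + ‖B‖) ^ prev) := by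
          have := hEm s
          have hb : (0:ℝ) < (1 + ‖B‖) ^ prev := by positivity
          positivity
        have := lt_min h1 h2
        positivity
      -- Step D: recursive construction
      have hex : ∀ (s prev : ℕ), ∃ q : ℕ × (ℕ → X), (prev + 1 ≤ q.1) ∧
          ∀ k : ℕ, k < Ns s → ‖q.2 k‖ < dl s prev ∧
            (⇑T)^[q.1] (q.2 k) ∈ Metric.ball (cs s k) (eps s / (2 * (Ns s + 1))) := by
        intro s prev
        have hrad : (0:ℝ) < eps s / (2 * (Ns s + 1)) := by
          have := heps s; positivity
        obtain ⟨n, hn, hw⟩ := refined (prev+1) (dl s prev) (hdlpos s prev) (Ns s)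
          (fun j => Metric.ball (cs s (j:ℕ)) (eps s / (2 * (Ns s + 1))))
          (fun j => Metric.isOpen_ball)
          (fun j => ⟨_, Metric.mem_ball_self hrad⟩)
        choose a ha1 ha2 using hw
        refine ⟨⟨n, fun k => if h : k < Ns s then a ⟨k, h⟩ else 0⟩, hn, ?_⟩
        intro k hk
        constructor
        · show ‖(if h : k < Ns s then a ⟨k, h⟩ else 0)‖ < dl s prev
          rw [dif_pos hk]; exact ha1 _
        · show (⇑T)^[n] (if h : k < Ns s then a ⟨k, h⟩ else 0)
              ∈ Metric.ball (cs s k) (eps s / (2 * (Ns s + 1)))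
          rw [dif_pos hk]; exact ha2 ⟨k, hk⟩
      let g : ℕ → ℕ × (ℕ → X) := fun s =>
        Nat.rec (Classical.choose (hex 0 0))
          (fun s ih => Classical.choose (hex (s+1) (ih.1 + (σ s).1.1))) s
      let nn : ℕ → ℕ := fun s => (g s).1
      let aa : ℕ → ℕ → X := fun s => (g s).2
      let prevOf : ℕ → ℕ := fun s => Nat.rec 0 (fun s _ => nn s + Ns s) s
      have hgs : ∀ s, (prevOf s + 1 ≤ nn s) ∧
          ∀ k : ℕ, k < Ns s → ‖aa s k‖ < dl s (prevOf s) ∧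
            (⇑T)^[nn s] (aa s k) ∈ Metric.ball (cs s k) (eps s / (2 * (Ns s + 1))) := by
        intro s
        cases s with
        | zero => exact Classical.choose_spec (hex 0 0)
        | succ s => exact Classical.choose_spec (hex (s+1) ((g s).1 + (σ s).1.1))
      have hmono : ∀ s, nn s + Ns s < nn (s+1) := by
        intro s
        have := (hgs (s+1)).1
        simpa [prevOf] using this
      have hnnmono : Monotone nn :=
        (strictMono_nat_of_lt_succ fun s =>
          lt_of_le_of_lt (Nat.le_add_right _ (Ns s)) (hmono s)).monotone
      have hprev : ∀ s' s, s' < s → nn s' ≤ prevOf s := by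
        intro s' s h
        cases s with
        | zero => omega
        | succ s =>
          have h1 : nn s' ≤ nn s := hnnmono (Nat.lt_succ_iff.1 h)
          have h2 : prevOf (s+1) = nn s + Ns s := rfl
          omega
      have hblock : ∀ s' s, s' < s → nn s' + Ns s' < nn s := by
        intro s' s h
        have h1 : nn s' + Ns s' < nn (s'+1) := hmono s'
        have h2 : nn (s'+1) ≤ nn s := hnnmono h
        omega
      -- the building blocks
      let w : ℕ → Y := fun s => ∑ k ∈ Finset.range (Ns s), ι (nn s + k) (aa s k)
      have hwnorm : ∀ s, ‖w s‖ ≤ (Ns s) * dl s (prevOf s) := by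
        intro s
        calc ‖w s‖ ≤ ∑ k ∈ Finset.range (Ns s), ‖aa s k‖ :=
              le_trans (norm_sum_le _ _) (Finset.sum_le_sum fun k _ => hι _ _)
          _ ≤ ∑ _k ∈ Finset.range (Ns s), dl s (prevOf s) :=
              Finset.sum_le_sum fun k hk =>
                le_of_lt ((hgs s).2 k (Finset.mem_range.1 hk)).1
          _ = (Ns s) * dl s (prevOf s) := by
              rw [Finset.sum_const, Finset.card_range, nsmul_eq_mul]
      have hwmin : ∀ s, ‖w s‖ ≤
          min ((1/2)^s) ((1/2)^s * Em s / (2 * (1 + ‖B‖) ^ (prevOf s))) := by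
        intro s
        refine le_trans (hwnorm s) ?_
        have hminnn : (0:ℝ) ≤ min ((1/2)^s) ((1/2)^s * Em s / (2 * (1 + ‖B‖) ^ (prevOf s))) := by
          have h1 : (0:ℝ) ≤ (1/2)^s := by positivity
          have h2 : (0:ℝ) ≤ (1/2)^s * Em s / (2 * (1 + ‖B‖) ^ (prevOf s)) := by
            have := (hEm s).le
            have hb : (0:ℝ) < (1 + ‖B‖) ^ (prevOf s) := by positivity
            positivity
          exact le_min h1 h2
        have : (Ns s : ℝ) * dl s (prevOf s)
            = ((Ns s : ℝ) / (Ns s + 1)) *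
              min ((1/2)^s) ((1/2)^s * Em s / (2 * (1 + ‖B‖) ^ (prevOf s))) := by
          simp only [dl]
          field_simp
        rw [this]
        have hfrac : (Ns s : ℝ) / (Ns s + 1) ≤ 1 := by
          rw [div_le_one (by positivity)]; linarith
        nlinarith
      have hw1 : ∀ s, ‖w s‖ ≤ (1/2)^s := fun s =>
        le_trans (hwmin s) (min_le_left _ _)
      have hw3 : ∀ s' s, s' < s → (1 + ‖B‖) ^ (nn s') * ‖w s‖ ≤ (1/2)^s * eps s' / 2 := by
        intro s' s h
        have h1 : ‖w s‖ ≤ (1/2)^s * Em s / (2 * (1 + ‖B‖) ^ (prevOf s)) :=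
          le_trans (hwmin s) (min_le_right _ _)
        have hble : (1 + ‖B‖) ^ (nn s') ≤ (1 + ‖B‖) ^ (prevOf s) :=
          pow_le_pow_right₀ (by linarith [norm_nonneg B]) (hprev s' s h)
        have hppos : (0:ℝ) < (1 + ‖B‖) ^ (prevOf s) := by positivity
        have h2 : (1 + ‖B‖) ^ (nn s') * ‖w s‖
            ≤ (1 + ‖B‖) ^ (prevOf s) * ((1/2)^s * Em s / (2 * (1 + ‖B‖) ^ (prevOf s))) := by
          have hwnn : 0 ≤ ‖w s‖ := norm_nonneg _
          have := mul_le_mul hble h1 hwnn (le_of_lt hppos)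
          linarith
        have h3 : (1 + ‖B‖) ^ (prevOf s) * ((1/2)^s * Em s / (2 * (1 + ‖B‖) ^ (prevOf s)))
            = (1/2)^s * Em s / 2 := by
          field_simp
        rw [h3] at h2
        refine le_trans h2 ?_
        have := hEmle s' s (le_of_lt h)
        have hp2 : (0:ℝ) ≤ (1/2)^s := by positivity
        have : (1/2:ℝ)^s * Em s ≤ (1/2)^s * eps s' := by nlinarith
        linarith
      have hsumw : Summable w :=
        Summable.of_norm_bounded (g := fun s => (1/2:ℝ)^s)
          (summable_geometric_of_lt_one (by norm_num) (by norm_num)) hw1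
      set y : Y := ∑' s, w s with hy
      -- action of iterates of B on the blocks
      have hBsingle : ∀ (n j : ℕ) (x : X), (⇑B)^[n] (ι (n + j) x) = ι j ((⇑T)^[n] x) := by
        intro n j x
        have h0 : ∀ k, e k ((⇑B)^[n] (ι (n + j) x) - ι j ((⇑T)^[n] x)) = 0 := by
          intro k
          rw [map_sub, hiter]
          by_cases hkj : k = j
          · subst hkj
            rw [show n + k = k + n from Nat.add_comm n k] at *
            rw [hei, hei]
            simp
          · rw [heij _ _ (by omega), heij _ _ (by omega) , clm_iter_zero, sub_zero]
        have := hsep _ h0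
        rwa [sub_eq_zero] at this
      have hBkill : ∀ (n j : ℕ), j < n → ∀ x, (⇑B)^[n] (ι j x) = 0 := by
        intro n j hj x
        refine hsep _ fun k => ?_
        rw [hiter, heij _ _ (by omega), clm_iter_zero]
      have hBw_lt : ∀ s' s, s' < s → (⇑B)^[nn s] (w s') = 0 := by
        intro s' s h
        have : (⇑B)^[nn s] (w s')
            = ∑ k ∈ Finset.range (Ns s'), (⇑B)^[nn s] (ι (nn s' + k) (aa s' k)) := by
          rw [← FunLike.coe_pow_eq_iterate, map_sum]
        rw [this]
        refine Finset.sum_eq_zero fun k hk => ?_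
        refine hBkill _ _ ?_ _
        have := hblock s' s h
        have := Finset.mem_range.1 hk
        omega
      have hBw_eq : ∀ s, (⇑B)^[nn s] (w s)
          = ∑ k ∈ Finset.range (Ns s), ι k ((⇑T)^[nn s] (aa s k)) := by
        intro s
        have : (⇑B)^[nn s] (w s)
            = ∑ k ∈ Finset.range (Ns s), (⇑B)^[nn s] (ι (nn s + k) (aa s k)) := by
          rw [← FunLike.coe_pow_eq_iterate, map_sum]
        rw [this]
        exact Finset.sum_congr rfl fun k _ => hBsingle (nn s) k (aa s k)
      -- the main estimate
      have hmain : ∀ s, ‖(⇑B)^[nn s] y - ts s‖ ≤ 2 * eps s := by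
        intro s
        have hmap : (⇑B)^[nn s] y = ∑' s', (⇑B)^[nn s] (w s') := by
          rw [hy, ← FunLike.coe_pow_eq_iterate]
          exact (B ^ nn s).map_tsum hsumw
        set v : ℕ → Y := fun s' => (⇑B)^[nn s] (w s') with hv
        have hvb : ∀ s', ‖v s'‖ ≤ (1 + ‖B‖) ^ (nn s) * (1/2)^s' := by
          intro s'
          refine le_trans (clm_iter_norm_le B (nn s) (w s')) ?_
          have := hw1 s'
          have hbp : (0:ℝ) ≤ (1 + ‖B‖) ^ (nn s) := by positivity
          nlinarith
        have hvsum : Summable v := by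
          refine Summable.of_norm_bounded (g := fun s' => (1 + ‖B‖) ^ (nn s) * (1/2)^s') ?_ hvb
          exact (summable_geometric_of_lt_one (by norm_num) (by norm_num)).mul_left _
        have hsplit : ∑' s', v s' = v s + ∑' s', ite (s' = s) 0 (v s') :=
          hvsum.tsum_eq_add_tsum_ite s
        -- tail estimate
        have htailb : ∀ s', ‖ite (s' = s) 0 (v s')‖ ≤ (1 + ‖B‖) ^ (nn s) * (1/2)^s' := by
          intro s'
          by_cases h : s' = s
          · rw [if_pos h]
            simp only [norm_zero]
            positivity
          · rw [if_neg h]; exact hvb s'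
        have htns : Summable (fun s' => ‖ite (s' = s) 0 (v s')‖) := by
          refine Summable.of_nonneg_of_le (fun s' => norm_nonneg _) htailb ?_
          exact (summable_geometric_of_lt_one (by norm_num) (by norm_num)).mul_left _
        have hinj : Function.Injective (fun k : ℕ => s + 1 + k) := fun a b h => by
          have h' : s + 1 + a = s + 1 + b := h
          omega
        have hsupp : Function.support (fun s' => ‖ite (s' = s) 0 (v s')‖)
            ⊆ Set.range (fun k : ℕ => s + 1 + k) := by
          intro s' hs'
          simp only [Function.mem_support] at hs'
          by_contra hr
          have hsle : s' ≤ s := by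
            by_contra hgt
            refine hr ⟨s' - s - 1, ?_⟩
            show s + 1 + (s' - s - 1) = s'
            omega
          rcases Nat.lt_or_ge s' s with h1 | h1
          · exact hs' (by rw [if_neg (by omega), hv]; simp only
                          rw [hBw_lt s' s h1, norm_zero])
          · have : s' = s := le_antisymm hsle h1
            exact hs' (by rw [if_pos this, norm_zero])
        have hre : ∑' s', ‖ite (s' = s) 0 (v s')‖
            = ∑' k, ‖ite ((s + 1 + k) = s) 0 (v (s + 1 + k))‖ :=
          (hinj.tsum_eq hsupp).symm
        have hterm : ∀ k : ℕ, ‖ite ((s + 1 + k) = s) 0 (v (s + 1 + k))‖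
            ≤ (1/2)^(k+1) * eps s := by
          intro k
          rw [if_neg (by omega)]
          have h1 : ‖v (s+1+k)‖ ≤ (1/2)^(s+1+k) * eps s / 2 := by
            have := hw3 s (s+1+k) (by omega)
            refine le_trans (clm_iter_norm_le B (nn s) (w (s+1+k))) this
          refine le_trans h1 ?_
          have h2 : ((1:ℝ)/2)^(s+1+k) ≤ (1/2)^(k+1) :=
            pow_le_pow_of_le_one (by norm_num) (by norm_num) (by omega)
          have := heps s
          calc (1/2:ℝ)^(s+1+k) * eps s / 2 ≤ (1/2)^(k+1) * eps s / 2 := by nlinarith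
            _ ≤ (1/2)^(k+1) * eps s := by nlinarith [pow_nonneg (by norm_num : (0:ℝ) ≤ 1/2) (k+1)]
        have hgeo : Summable (fun k : ℕ => ((1:ℝ)/2)^(k+1) * eps s) := by
          have : Summable (fun k : ℕ => ((1:ℝ)/2)^(k) * ((1/2) * eps s)) :=
            (summable_geometric_of_lt_one (by norm_num) (by norm_num)).mul_right _
          refine this.congr fun k => by ring
        have htsle : ∑' k, ‖ite ((s + 1 + k) = s) 0 (v (s + 1 + k))‖
            ≤ ∑' k : ℕ, ((1:ℝ)/2)^(k+1) * eps s := by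
          refine Summable.tsum_le_tsum hterm ?_ hgeo
          exact htns.comp_injective hinj
        have hgeosum : ∑' k : ℕ, ((1:ℝ)/2)^(k+1) * eps s = eps s := by
          have h1 : ∑' k : ℕ, ((1:ℝ)/2)^(k+1) * eps s
              = ((1/2) * eps s) * ∑' k : ℕ, ((1:ℝ)/2)^k := by
            rw [← tsum_mul_left]
            exact tsum_congr fun k => by ring
          rw [h1, tsum_geometric_of_lt_one (by norm_num) (by norm_num)]
          have h2 : ((1:ℝ) - 1/2)⁻¹ = 2 := by norm_num
          rw [h2]; ring
        have htail : ‖∑' s', ite (s' = s) 0 (v s')‖ ≤ eps s := by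
          calc ‖∑' s', ite (s' = s) 0 (v s')‖ ≤ ∑' s', ‖ite (s' = s) 0 (v s')‖ :=
                norm_tsum_le_tsum_norm htns
            _ = ∑' k, ‖ite ((s + 1 + k) = s) 0 (v (s + 1 + k))‖ := hre
            _ ≤ ∑' k : ℕ, ((1:ℝ)/2)^(k+1) * eps s := htsle
            _ = eps s := hgeosum
        have hts : ts s = ∑ k ∈ Finset.range (Ns s), ι k (cs s k) := rfl
        have hmain1 : ‖v s - ts s‖ ≤ eps s / 2 := by
          have hv1 : v s - ts s
              = ∑ k ∈ Finset.range (Ns s), ι k ((⇑T)^[nn s] (aa s k) - cs s k) := by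
            have hvs : v s = (⇑B)^[nn s] (w s) := rfl
            rw [hvs, hBw_eq s, hts, ← Finset.sum_sub_distrib]
            exact Finset.sum_congr rfl fun k _ => by rw [map_sub]
          rw [hv1]
          calc ‖∑ k ∈ Finset.range (Ns s), ι k ((⇑T)^[nn s] (aa s k) - cs s k)‖
              ≤ ∑ k ∈ Finset.range (Ns s), ‖(⇑T)^[nn s] (aa s k) - cs s k‖ :=
                le_trans (norm_sum_le _ _) (Finset.sum_le_sum fun k _ => hι _ _)
            _ ≤ ∑ _k ∈ Finset.range (Ns s), (eps s / (2 * (Ns s + 1))) := by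
                refine Finset.sum_le_sum fun k hk => ?_
                have h := ((hgs s).2 k (Finset.mem_range.1 hk)).2
                rw [Metric.mem_ball, dist_eq_norm] at h
                exact le_of_lt h
            _ = (Ns s) * (eps s / (2 * (Ns s + 1))) := by
                rw [Finset.sum_const, Finset.card_range, nsmul_eq_mul]
            _ ≤ eps s / 2 := by
                rw [← mul_div_assoc]
                rw [div_le_div_iff₀ (by positivity) (by norm_num)]
                have := (heps s).le
                nlinarith [Nat.cast_nonneg (α := ℝ) (Ns s)]
        have hfin : (⇑B)^[nn s] y - ts s = (v s - ts s) + ∑' s', ite (s' = s) 0 (v s') := by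
          rw [hmap, hsplit]
          abel
        calc ‖(⇑B)^[nn s] y - ts s‖
            ≤ ‖v s - ts s‖ + ‖∑' s', ite (s' = s) 0 (v s')‖ := by
              rw [hfin]; exact norm_add_le _ _
          _ ≤ eps s / 2 + eps s := add_le_add hmain1 htail
          _ ≤ 2 * eps s := by linarith [heps s]
      -- conclusion: y has dense orbit
      refine ⟨y, ?_⟩
      rw [Metric.dense_iff]
      intro z r hr
      obtain ⟨i, hi⟩ := htgt z (r/4) (by linarith)
      obtain ⟨rr, hrr0⟩ := exists_nat_gt (4/r)
      have hrr : (1:ℝ) / ((rr:ℝ) + 1) < r/4 := by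
        rw [div_lt_div_iff₀ (by positivity) (by norm_num)]
        have h4 : (4:ℝ) < rr * r := (div_lt_iff₀ hr).1 hrr0
        nlinarith
      obtain ⟨s, hs⟩ := hσ (i, rr)
      have hσ1 : (σ s).1 = i := by rw [hs]
      have hσ2 : (σ s).2 = rr := by rw [hs]
      have hts2 : ts s = tgt i := by show tgt (σ s).1 = tgt i; rw [hσ1]
      have heps2 : eps s = 1 / ((rr:ℝ) + 1) := by
        show 1 / (((σ s).2 : ℝ) + 1) = 1 / ((rr:ℝ) + 1)
        rw [hσ2]
      refine ⟨(⇑B)^[nn s] y, ?_, ⟨nn s, rfl⟩⟩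
      rw [Metric.mem_ball, dist_eq_norm]
      have h1 := hmain s
      rw [hts2, heps2] at h1
      have h2 : ‖tgt i - z‖ = ‖z - tgt i‖ := norm_sub_rev _ _
      calc ‖(⇑B)^[nn s] y - z‖
          ≤ ‖(⇑B)^[nn s] y - tgt i‖ + ‖tgt i - z‖ :=
            norm_sub_le_norm_sub_add_norm_sub _ _ _
        _ < r := by rw [h2]; linarith

end Abstract


section LpInst
variable {X : Type*} [NormedAddCommGroup X] [NormedSpace ℝ X]

/-- coordinate map on lp -/
noncomputable def lpCoord (p : ℝ≥0∞) [Fact (1 ≤ p)] (k : ℕ) :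
    lp (fun _ : ℕ => X) p →L[ℝ] X :=
  LinearMap.mkContinuous
    { toFun := fun f => f k
      map_add' := fun f g => by simp
      map_smul' := fun c f => by simp }
    1 (fun f => by
      show ‖f k‖ ≤ 1 * ‖f‖
      simpa using lp.norm_apply_le_norm
        (by exact_mod_cast (zero_lt_one.trans_le (Fact.out : 1 ≤ p)).ne') f k)

@[simp] lemma lpCoord_apply (p : ℝ≥0∞) [Fact (1 ≤ p)] (k : ℕ)
    (f : lp (fun _ : ℕ => X) p) : lpCoord p k f = f k := rfl

lemma lp_single_add (p : ℝ≥0∞) (k : ℕ) (x y : X) :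
    lp.single p k (x + y) = (lp.single p k x : lp (fun _ : ℕ => X) p) + lp.single p k y := by
  apply lp.ext
  funext j
  by_cases h : j = k
  · subst h
    simp [lp.single_apply_self]
  · simp [lp.single_apply_ne p k _ h]

lemma lp_single_norm_le (p : ℝ≥0∞) [Fact (1 ≤ p)] (k : ℕ) (x : X) :
    ‖(lp.single p k x : lp (fun _ : ℕ => X) p)‖ ≤ ‖x‖ := by
  rcases eq_or_ne p ∞ with rfl | hp
  · refine lp.norm_le_of_forall_le' ‖x‖ fun i => ?_
    by_cases h : i = k
    · subst h; rw [lp.single_apply_self]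
    · rw [lp.single_apply_ne _ _ _ h]; simpa using norm_nonneg x
  · have hp' : 0 < p.toReal :=
      ENNReal.toReal_pos (zero_lt_one.trans_le (Fact.out : 1 ≤ p)).ne' hp
    exact le_of_eq (lp.norm_single (E := fun _ : ℕ => X) (zero_lt_one.trans_le (Fact.out : 1 ≤ p)) k x)

/-- single map on lp -/
noncomputable def lpSingleL (p : ℝ≥0∞) [Fact (1 ≤ p)] (k : ℕ) :
    X →L[ℝ] lp (fun _ : ℕ => X) p :=
  LinearMap.mkContinuous
    { toFun := fun x => lp.single p k x
      map_add' := fun x y => lp_single_add p k x y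
      map_smul' := fun c x => by simp }
    1 (fun x => by simpa using lp_single_norm_le p k x)

@[simp] lemma lpSingleL_apply (p : ℝ≥0∞) [Fact (1 ≤ p)] (k : ℕ) (x : X) :
    (lpSingleL p k x : lp (fun _ : ℕ => X) p) = lp.single p k x := rfl

lemma lp_coord_tendsto (p : ℝ≥0∞) [Fact (1 ≤ p)] (hp : p ≠ ∞)
    (f : lp (fun _ : ℕ => X) p) :
    Tendsto (fun k => ‖f k‖) atTop (nhds 0) := by
  have hp' : 0 < p.toReal :=
    ENNReal.toReal_pos (zero_lt_one.trans_le (Fact.out : 1 ≤ p)).ne' hp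
  have hsum : Summable fun i : ℕ => ‖f i‖ ^ p.toReal :=
    (memℓp_gen_iff hp').1 (lp.memℓp f)
  have h0 : Tendsto (fun i : ℕ => ‖f i‖ ^ p.toReal) atTop (nhds 0) :=
    hsum.tendsto_atTop_zero
  have h1 : Tendsto (fun i : ℕ => (‖f i‖ ^ p.toReal) ^ p.toReal⁻¹) atTop
      (nhds ((0:ℝ) ^ p.toReal⁻¹)) :=
    h0.rpow_const (Or.inr (by positivity))
  rw [Real.zero_rpow (by positivity)] at h1
  refine h1.congr fun i => ?_
  rw [Real.rpow_rpow_inv (norm_nonneg _) hp'.ne']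

lemma lp_dense_fin (p : ℝ≥0∞) [Fact (1 ≤ p)] (hp : p ≠ ∞)
    (f : lp (fun _ : ℕ => X) p) (ε : ℝ) (hε : 0 < ε) :
    ∃ N : ℕ, ‖f - ∑ k ∈ Finset.range N, lp.single p k (f k)‖ < ε := by
  classical
  have h := lp.hasSum_single hp f
  rw [HasSum, Metric.tendsto_nhds] at h
  have h' := h ε hε
  rw [SummationFilter.unconditional_filter, Filter.eventually_atTop] at h'
  obtain ⟨s₀, hs₀⟩ := h'
  obtain ⟨N, hN⟩ := s₀.exists_nat_subset_range
  have := hs₀ (Finset.range N) hN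
  rw [dist_eq_norm] at this
  exact ⟨N, by rwa [norm_sub_rev] at this⟩
end LpInst


section C0Inst
variable {X : Type*} [NormedAddCommGroup X] [NormedSpace ℝ X]

lemma c0Sum_mem_iff (x : lp (fun _ : ℕ => X) ∞) :
    x ∈ c0Sum (fun _ : ℕ => X) ↔ Tendsto (fun i => ‖x i‖) atTop (nhds 0) := by
  rw [← Nat.cofinite_eq_atTop]; rfl

lemma c0Sum_isClosed :
    IsClosed ((c0Sum (fun _ : ℕ => X) : Submodule ℝ (lp (fun _ : ℕ => X) ∞)) :
      Set (lp (fun _ : ℕ => X) ∞)) := by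
  rw [← closure_subset_iff_isClosed]
  intro x hx
  rw [SetLike.mem_coe, c0Sum_mem_iff]
  rw [Metric.tendsto_atTop]
  intro ε hε
  obtain ⟨b, hbS, hbx⟩ := Metric.mem_closure_iff.1 hx (ε/2) (by linarith)
  rw [SetLike.mem_coe, c0Sum_mem_iff, Metric.tendsto_atTop] at hbS
  obtain ⟨N, hN⟩ := hbS (ε/2) (by linarith)
  refine ⟨N, fun i hi => ?_⟩
  have h1 : ‖x i - b i‖ ≤ ‖x - b‖ := by
    have := lp.norm_apply_le_norm ENNReal.top_ne_zero (x - b) i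
    simpa using this
  have h2 : dist ‖b i‖ 0 < ε/2 := hN i hi
  rw [Real.dist_eq, sub_zero, abs_of_nonneg (norm_nonneg _)] at h2 ⊢
  have h3 : ‖x i‖ ≤ ‖x i - b i‖ + ‖b i‖ := by
    calc ‖x i‖ = ‖(x i - b i) + b i‖ := by rw [sub_add_cancel]
      _ ≤ ‖x i - b i‖ + ‖b i‖ := norm_add_le _ _
  have h4 : dist x b < ε/2 := hbx
  rw [dist_eq_norm] at h4
  linarith

instance [CompleteSpace X] : CompleteSpace ↥(c0Sum (fun _ : ℕ => X)) := by
  haveI : Fact ((1:ℝ≥0∞) ≤ ⊤) := ⟨le_top⟩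
  exact IsClosed.completeSpace_coe (hs := c0Sum_isClosed (X := X))

/-- coordinate functional on the c0 sum -/
noncomputable def c0Coord (k : ℕ) : ↥(c0Sum (fun _ : ℕ => X)) →L[ℝ] X :=
  LinearMap.mkContinuous
    { toFun := fun f => (f : lp (fun _ : ℕ => X) ∞) k
      map_add' := fun f g => by simp
      map_smul' := fun c f => by simp }
    1 (fun f => by
      show ‖(f : lp (fun _ : ℕ => X) ∞) k‖ ≤ 1 * ‖f‖
      simpa using lp.norm_apply_le_norm ENNReal.top_ne_zero
        (f : lp (fun _ : ℕ => X) ∞) k)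

@[simp] lemma c0Coord_apply (k : ℕ) (f : ↥(c0Sum (fun _ : ℕ => X))) :
    c0Coord k f = (f : lp (fun _ : ℕ => X) ∞) k := rfl

lemma c0_single_mem (k : ℕ) (x : X) :
    (lp.single ∞ k x : lp (fun _ : ℕ => X) ∞) ∈ c0Sum (fun _ : ℕ => X) := by
  rw [c0Sum_mem_iff]
  have h : ∀ i ≥ k + 1, ‖(lp.single ∞ k x : lp (fun _ : ℕ => X) ∞) i‖ = 0 := by
    intro i hi
    rw [lp.single_apply_ne _ _ _ (by omega), norm_zero]
  rw [Metric.tendsto_atTop]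
  intro ε hε
  exact ⟨k + 1, fun i hi => by rw [Real.dist_eq, sub_zero, h i hi, abs_zero]; exact hε⟩

lemma c0_single_norm_le (k : ℕ) (x : X) :
    ‖(lp.single ∞ k x : lp (fun _ : ℕ => X) ∞)‖ ≤ ‖x‖ := by
  refine lp.norm_le_of_forall_le' ‖x‖ fun i => ?_
  by_cases h : i = k
  · subst h; rw [lp.single_apply_self]
  · rw [lp.single_apply_ne _ _ _ h]; simpa using norm_nonneg x

lemma c0_single_add (k : ℕ) (x y : X) :
    lp.single ∞ k (x + y) = (lp.single ∞ k x : lp (fun _ : ℕ => X) ∞) + lp.single ∞ k y := by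
  apply lp.ext
  funext j
  by_cases h : j = k
  · subst h; simp [lp.single_apply_self]
  · simp [lp.single_apply_ne _ k _ h]

/-- single map into the c0 sum -/
noncomputable def c0SingleL (k : ℕ) : X →L[ℝ] ↥(c0Sum (fun _ : ℕ => X)) :=
  LinearMap.mkContinuous
    { toFun := fun x => ⟨lp.single ∞ k x, c0_single_mem k x⟩
      map_add' := fun x y => by
        apply Subtype.ext
        exact c0_single_add k x y
      map_smul' := fun c x => by
        apply Subtype.ext
        simp }
    1 (fun x => by simpa using c0_single_norm_le k x)

@[simp] lemma c0SingleL_coe (k : ℕ) (x : X) :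
    ((c0SingleL k x : ↥(c0Sum (fun _ : ℕ => X))) : lp (fun _ : ℕ => X) ∞)
      = lp.single ∞ k x := rfl

lemma c0_dense_fin (f : ↥(c0Sum (fun _ : ℕ => X))) (ε : ℝ) (hε : 0 < ε) :
    ∃ N : ℕ, ‖f - ∑ k ∈ Finset.range N, c0SingleL k ((f : lp (fun _ : ℕ => X) ∞) k)‖ < ε := by
  classical
  have hf := (c0Sum_mem_iff (f : lp (fun _ : ℕ => X) ∞)).1 f.2
  rw [Metric.tendsto_atTop] at hf
  obtain ⟨N, hN⟩ := hf (ε/2) (by linarith)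
  refine ⟨N, ?_⟩
  have hcoe : ((f - ∑ k ∈ Finset.range N, c0SingleL k ((f : lp (fun _ : ℕ => X) ∞) k) :
      ↥(c0Sum (fun _ : ℕ => X))) : lp (fun _ : ℕ => X) ∞)
      = (f : lp (fun _ : ℕ => X) ∞)
        - ∑ k ∈ Finset.range N, lp.single ∞ k ((f : lp (fun _ : ℕ => X) ∞) k) := by
    push_cast
    rfl
  have hnorm : ‖f - ∑ k ∈ Finset.range N, c0SingleL k ((f : lp (fun _ : ℕ => X) ∞) k)‖
      = ‖(f : lp (fun _ : ℕ => X) ∞)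
        - ∑ k ∈ Finset.range N, lp.single ∞ k ((f : lp (fun _ : ℕ => X) ∞) k)‖ := by
    rw [← hcoe]; rfl
  rw [hnorm]
  have hbound : ∀ i : ℕ, ‖((f : lp (fun _ : ℕ => X) ∞)
      - ∑ k ∈ Finset.range N, lp.single ∞ k ((f : lp (fun _ : ℕ => X) ∞) k)) i‖ ≤ ε/2 := by
    intro i
    have hco : ((f : lp (fun _ : ℕ => X) ∞)
        - ∑ k ∈ Finset.range N, lp.single ∞ k ((f : lp (fun _ : ℕ => X) ∞) k)) i
        = (f : lp (fun _ : ℕ => X) ∞) i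
          - ∑ k ∈ Finset.range N, (lp.single ∞ k ((f : lp (fun _ : ℕ => X) ∞) k) :
              lp (fun _ : ℕ => X) ∞) i := by
      rw [lp.coeFn_sub, Pi.sub_apply, lp.coeFn_sum, Finset.sum_apply]
    rw [hco]
    by_cases hi : i < N
    · have : ∑ k ∈ Finset.range N, (lp.single ∞ k ((f : lp (fun _ : ℕ => X) ∞) k) :
          lp (fun _ : ℕ => X) ∞) i = (f : lp (fun _ : ℕ => X) ∞) i := by
        rw [Finset.sum_eq_single i]
        · exact lp.single_apply_self _ _ _
        · intro k _ hk
          exact lp.single_apply_ne _ _ _ (Ne.symm hk)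
        · intro h; exact absurd (Finset.mem_range.2 hi) h
      rw [this, sub_self, norm_zero]
      linarith
    · have : ∑ k ∈ Finset.range N, (lp.single ∞ k ((f : lp (fun _ : ℕ => X) ∞) k) :
          lp (fun _ : ℕ => X) ∞) i = 0 := by
        refine Finset.sum_eq_zero fun k hk => ?_
        have hk' := Finset.mem_range.1 hk
        exact lp.single_apply_ne _ _ _ (by omega)
      rw [this, sub_zero]
      have := hN i (by omega)
      rw [Real.dist_eq, sub_zero, abs_of_nonneg (norm_nonneg _)] at this
      linarith
  calc ‖(f : lp (fun _ : ℕ => X) ∞)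
        - ∑ k ∈ Finset.range N, lp.single ∞ k ((f : lp (fun _ : ℕ => X) ∞) k)‖
      ≤ ε/2 := lp.norm_le_of_forall_le' (ε/2) hbound
    _ < ε := by linarith
end C0Inst


/-- `B_T` is hypercyclic on `ℓ^p(X,ℕ)` (resp. `c₀(X,ℕ)`) iff for every finite
family of non-empty open sets `U_1,…,U_N ⊆ X` there is `n ≥ 1` with
`T^n(B_X(0,1)) ∩ U_j ≠ ∅` for all `j`. -/
theorem stmt_2 {X : Type*} [NormedAddCommGroup X] [NormedSpace ℝ X] [CompleteSpace X]
    [TopologicalSpace.SeparableSpace X]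
    (T : X →L[ℝ] X) (p : ℝ≥0∞) [Fact (1 ≤ p)] (hp : p ≠ ∞) :
    (∀ B : lp (fun _ : ℕ => X) p →L[ℝ] lp (fun _ : ℕ => X) p,
      (∀ (x : lp (fun _ : ℕ => X) p) (k : ℕ),
          (B x : ℕ → X) k = T ((x : ℕ → X) (k + 1))) →
      (Hypercyclic ⇑B ↔
        ∀ N : ℕ, 1 ≤ N → ∀ U : Fin N → Set X, (∀ j, IsOpen (U j)) → (∀ j, (U j).Nonempty) →
          ∃ n : ℕ, 1 ≤ n ∧ ∀ j, ((⇑T)^[n] '' Metric.ball (0 : X) 1 ∩ U j).Nonempty))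
    ∧ (∀ B : c0Sum (fun _ : ℕ => X) →L[ℝ] c0Sum (fun _ : ℕ => X),
      (∀ (x : c0Sum (fun _ : ℕ => X)) (k : ℕ),
          ((B x : lp (fun _ : ℕ => X) ∞) : ℕ → X) k
            = T (((x : lp (fun _ : ℕ => X) ∞) : ℕ → X) (k + 1))) →
      (Hypercyclic ⇑B ↔
        ∀ N : ℕ, 1 ≤ N → ∀ U : Fin N → Set X, (∀ j, IsOpen (U j)) → (∀ j, (U j).Nonempty) →
          ∃ n : ℕ, 1 ≤ n ∧ ∀ j, ((⇑T)^[n] '' Metric.ball (0 : X) 1 ∩ U j).Nonempty)) := by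
  classical
  constructor
  · intro B hBc
    exact abstract_shift T B (lpCoord p) (lpSingleL p)
      (fun k y => by
        simpa using lp.norm_apply_le_norm
          (by exact_mod_cast (zero_lt_one.trans_le (Fact.out : 1 ≤ p)).ne') y k)
      (fun k x => by simpa using lp_single_norm_le p k x)
      (fun k x => lp.single_apply_self (E := fun _ : ℕ => X) p k x)
      (fun j k hjk x => lp.single_apply_ne (E := fun _ : ℕ => X) p j x (Ne.symm hjk))
      (fun y h => lp.ext (funext fun k => by simpa using h k))
      (fun y ε hε => by
        obtain ⟨N, hN⟩ := lp_dense_fin p hp y ε hε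
        exact ⟨N, fun k => y k, hN⟩)
      (fun y => lp_coord_tendsto p hp y)
      (fun y k => hBc y k)
  · intro B hBc
    exact abstract_shift T B c0Coord c0SingleL
      (fun k y => by
        simpa using lp.norm_apply_le_norm ENNReal.top_ne_zero
          (y : lp (fun _ : ℕ => X) ∞) k)
      (fun k x => by simpa using c0_single_norm_le k x)
      (fun k x => lp.single_apply_self (E := fun _ : ℕ => X) ∞ k x)
      (fun j k hjk x => lp.single_apply_ne (E := fun _ : ℕ => X) ∞ j x (Ne.symm hjk))
      (fun y h => Subtype.ext (lp.ext (funext fun k => by simpa using h k)))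
      (fun y ε hε => by
        obtain ⟨N, hN⟩ := c0_dense_fin y ε hε
        exact ⟨N, fun k => (y : lp (fun _ : ℕ => X) ∞) k, hN⟩)
      (fun y => (c0Sum_mem_iff (X := X) (y : lp (fun _ : ℕ => X) ∞)).1 y.2)
      (fun y k => hBc y k)
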